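/- For every odd integer k ≥ 3, there exists an intersecting family F of k-element subsets of [2k] such that every (k-1)-element subset of [2k] can be written as F \ F' for some F, F' ∈ F. Concretely, the family G of all k-subsets {a_1,…,a_k} of [2k] whose element sum is odd has this property. -/

import Mathlib

open Finset

lemma gauss (n : ℕ) : 2 * ∑ x ∈ Icc 1 n, x = n * (n+1) := by
  induction n with
  | zero => simp
  | succ n ih =>
    rw [Finset.sum_Icc_succ_top (by omega)]
    ring_nf
    ring_nf at ih
    omega

lemma parity_bound (k p : ℕ) (S : Finset ℕ) (hS : S ⊆ Icc 1 (2*k)) :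
    (S.filter (fun x => x % 2 = p)).card ≤ k := by
  classical
  have h := Finset.card_le_card_of_injOn (f := fun x => (x+1)/2)
    (s := S.filter (fun x => x % 2 = p)) (t := Icc 1 k)
    (by
      intro x hx
      simp only [Finset.coe_filter, Set.mem_setOf_eq, Finset.mem_coe, mem_filter] at hx
      have h2 := hS hx.1
      simp only [Finset.coe_Icc, Set.mem_Icc, Finset.mem_coe, mem_Icc] at h2 ⊢
      omega)
    (by
      intro x hx y hy hxy
      simp only [Finset.coe_filter, Set.mem_setOf_eq] at hx hy
      have hxy2 : (x+1)/2 = (y+1)/2 := hxy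
      omega)
  simpa using h

lemma exists_parity (k p : ℕ) (hp : p < 2) (S : Finset ℕ) (hS : S ⊆ Icc 1 (2*k))
    (hcard : k + 1 ≤ S.card) : ∃ x ∈ S, x % 2 = p := by
  by_contra h
  push_neg at h
  have hsub : S ⊆ S.filter (fun x => x % 2 = 1 - p) := by
    intro x hx
    simp only [mem_filter]
    exact ⟨hx, by have := h x hx; omega⟩
  have := (Finset.card_le_card hsub).trans (parity_bound k (1-p) S hS)
  omega

theorem stmt_0 (k : ℕ) (hk : 3 ≤ k) (hodd : Odd k) :
    ∃ F : Finset (Finset ℕ),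
      (∀ A ∈ F, A ⊆ Finset.Icc 1 (2 * k) ∧ A.card = k) ∧
      (∀ A ∈ F, ∀ B ∈ F, (A ∩ B).Nonempty) ∧
      (∀ X ⊆ Finset.Icc 1 (2 * k), X.card = k - 1 →
        ∃ A ∈ F, ∃ B ∈ F, X = A \ B) ∧
      F = ((Finset.Icc 1 (2 * k)).powersetCard k).filter
            (fun S => Odd (∑ x ∈ S, x)) := by
  classical
  have hcardI : (Icc 1 (2*k)).card = 2*k := by rw [Nat.card_Icc]; omega
  have hsumI : ∑ x ∈ Icc 1 (2*k), x = k*(2*k+1) := by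
    have h1 := gauss (2*k)
    have h2 : 2*k*(2*k+1) = 2*(k*(2*k+1)) := by ring
    omega
  have hoI : Odd (∑ x ∈ Icc 1 (2*k), x) := by
    rw [hsumI]; exact hodd.mul ⟨k, by ring⟩
  refine ⟨((Finset.Icc 1 (2 * k)).powersetCard k).filter
            (fun S => Odd (∑ x ∈ S, x)), ?_, ?_, ?_, rfl⟩
  · intro A hA
    simp only [mem_filter, Finset.mem_powersetCard] at hA
    exact ⟨hA.1.1, hA.1.2⟩
  · intro A hA B hB
    simp only [mem_filter, Finset.mem_powersetCard] at hA hB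
    by_contra h
    rw [Finset.not_nonempty_iff_eq_empty] at h
    have hdisj : Disjoint A B := Finset.disjoint_iff_inter_eq_empty.mpr h
    have hsub : A ∪ B ⊆ Icc 1 (2*k) := Finset.union_subset hA.1.1 hB.1.1
    have hcard : (A ∪ B).card = 2*k := by
      rw [Finset.card_union_of_disjoint hdisj, hA.1.2, hB.1.2]; omega
    have heq : A ∪ B = Icc 1 (2*k) := Finset.eq_of_subset_of_card_le hsub (by omega)
    have hsum : ∑ x ∈ A, x + ∑ x ∈ B, x = ∑ x ∈ Icc 1 (2*k), x := by
      rw [← heq, Finset.sum_union hdisj]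
    obtain ⟨a, ha⟩ := hA.2
    obtain ⟨b, hb⟩ := hB.2
    obtain ⟨c, hc⟩ := hoI
    omega
  · intro X hX hXcard
    set s := ∑ x ∈ X, x with hs
    set C := Icc 1 (2*k) \ X with hC
    have hCsub : C ⊆ Icc 1 (2*k) := Finset.sdiff_subset
    have hCcard : C.card = k + 1 := by
      rw [hC, Finset.card_sdiff, Finset.inter_eq_left.mpr hX, hcardI, hXcard]; omega
    obtain ⟨a, haC, hap⟩ := exists_parity k ((s+1)%2) (by omega) C hCsub (by omega)
    obtain ⟨b, hbC, hbp⟩ := exists_parity k (s%2) (by omega) C hCsub (by omega)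
    have hab : a ≠ b := by intro h; subst h; omega
    have haX : a ∉ X := (Finset.mem_sdiff.mp haC).2
    have hsumC : ∑ x ∈ C, x + s = k*(2*k+1) := by
      rw [hC, hs]; rw [Finset.sum_sdiff hX, hsumI]
    have hsumB : b + ∑ x ∈ C.erase b, x = ∑ x ∈ C, x :=
      Finset.add_sum_erase C (fun x => x) hbC
    obtain ⟨c, hc⟩ := hoI
    rw [hsumI] at hc
    refine ⟨insert a X, ?_, C.erase b, ?_, ?_⟩
    · simp only [mem_filter, Finset.mem_powersetCard]
      refine ⟨⟨Finset.insert_subset (hCsub haC) hX, ?_⟩, ?_⟩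
      · rw [Finset.card_insert_of_notMem haX, hXcard]; omega
      · rw [Finset.sum_insert haX, Nat.odd_iff]; omega
    · simp only [mem_filter, Finset.mem_powersetCard]
      refine ⟨⟨(Finset.erase_subset _ _).trans hCsub, ?_⟩, ?_⟩
      · rw [Finset.card_erase_of_mem hbC, hCcard]; omega
      · rw [Nat.odd_iff]; omega
    · ext x
      simp only [Finset.mem_sdiff, Finset.mem_insert, Finset.mem_erase]
      constructor
      · intro hx
        refine ⟨Or.inr hx, fun hcon => ?_⟩
        exact (Finset.mem_sdiff.mp hcon.2).2 hx
      · rintro ⟨h1 | h1, h2⟩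
        · exact absurd ⟨h1 ▸ hab, h1 ▸ haC⟩ h2
        · exact h1
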